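/- Let k ∈ ℕ, k ≥ 2, and let ρ : [0,1] → ℝ be continuous. Suppose P_k and q_k are algebraic polynomials of degree at most k with P_k(u) ≤ Φ(u) ≤ q_k(u) for all u ∈ [−1, 1]. Define A_k(ρ) = M_k(G_{1/k}(ρ)) and B_k(ρ) = N_k(H_{1/k}(ρ)). Then A_k(ρ) and B_k(ρ) are polynomials of degree at most k and A_k(ρ, x) ≤ ρ(x) ≤ B_k(ρ, x) for every x ∈ [0,1]. (Theorem 4.3, sandwich part.) -/

import Mathlib

open MeasureTheory Set Real

/-- Local modulus of continuity of `ρ` at `x` with radius `δ`, relative to `[0,1]`. -/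
noncomputable def omegaMod (ρ : ℝ → ℝ) (x δ : ℝ) : ℝ :=
  sSup {d : ℝ | ∃ u ∈ Icc (x - δ) (x + δ) ∩ Icc (0:ℝ) 1,
    ∃ v ∈ Icc (x - δ) (x + δ) ∩ Icc (0:ℝ) 1, d = |ρ u - ρ v|}

/-- One-sided operator `G_y`. -/
noncomputable def Gop (y : ℝ) (ρ : ℝ → ℝ) (x : ℝ) : ℝ :=
  ∫ t in (0:ℝ)..1, (ρ ((1 - y) * x + y * t) - omegaMod ρ ((1 - y) * x + y * t) y)

/-- One-sided operator `H_y`. -/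
noncomputable def Hop (y : ℝ) (ρ : ℝ → ℝ) (x : ℝ) : ℝ :=
  ∫ t in (0:ℝ)..1, (ρ ((1 - y) * x + y * t) + omegaMod ρ ((1 - y) * x + y * t) y)

/-- `L^p` norm on `[0,1]`. -/
noncomputable def lpNorm (p : ℝ) (f : ℝ → ℝ) : ℝ :=
  (∫ x in (0:ℝ)..1, |f x| ^ p) ^ (1 / p)

/-- Averaged modulus of smoothness `τ(ρ, δ)_p`. -/
noncomputable def tau (p : ℝ) (ρ : ℝ → ℝ) (δ : ℝ) : ℝ :=
  lpNorm p (fun x => omegaMod ρ x δ)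

/-- The step function `Φ`. -/
noncomputable def stepPhi (x : ℝ) : ℝ := if 0 < x then 1 else 0

/-- Operator `M_k` built from polynomials `P ≤ Φ ≤ Q`, applied to `f` with
`f x = f 0 + ∫_0^x g`. -/
noncomputable def Mop (P Q : Polynomial ℝ) (f0 : ℝ) (g : ℝ → ℝ) (x : ℝ) : ℝ :=
  f0 + (∫ t in (0:ℝ)..1, P.eval (x - t) * max (g t) 0)
     - ∫ t in (0:ℝ)..1, Q.eval (x - t) * max (-g t) 0

/-- Operator `N_k` built from polynomials `P ≤ Φ ≤ Q`, applied to `f` with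
`f x = f 0 + ∫_0^x g`. -/
noncomputable def Nop (P Q : Polynomial ℝ) (f0 : ℝ) (g : ℝ → ℝ) (x : ℝ) : ℝ :=
  f0 + (∫ t in (0:ℝ)..1, Q.eval (x - t) * max (g t) 0)
     - ∫ t in (0:ℝ)..1, P.eval (x - t) * max (-g t) 0

/-- Degree of best one-sided approximation by polynomials of degree at most `k`. -/
noncomputable def bestE (p : ℝ) (k : ℕ) (ρ : ℝ → ℝ) : ℝ :=
  sInf {c : ℝ | ∃ P Q : Polynomial ℝ, P.natDegree ≤ k ∧ Q.natDegree ≤ k ∧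
    (∀ x ∈ Icc (0:ℝ) 1, P.eval x ≤ ρ x ∧ ρ x ≤ Q.eval x) ∧
    c = lpNorm p (fun x => Q.eval x - P.eval x)}

private lemma clamp_aux {L U L' U' u c : ℝ} (hLU : L ≤ U) (hc : 0 ≤ c)
    (h1 : L - c ≤ L') (h2 : U' ≤ U + c) (hu1 : L' ≤ u) (hu2 : u ≤ U') :
    L ≤ max L (min u U) ∧ max L (min u U) ≤ U ∧ |u - max L (min u U)| ≤ c := by
  refine ⟨le_max_left _ _, max_le hLU (min_le_right _ _), ?_⟩
  rcases le_total u L with h | h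
  · rw [min_eq_left (h.trans hLU), max_eq_left h, abs_le]
    constructor <;> linarith
  · rcases le_total u U with h' | h'
    · rw [min_eq_left h', max_eq_right h, abs_le]
      constructor <;> linarith
    · rw [min_eq_right h', max_eq_right hLU, abs_le]
      constructor <;> linarith

private lemma omega_bddAbove {ρ : ℝ → ℝ} {M : ℝ} (hM : ∀ u ∈ Icc (0:ℝ) 1, |ρ u| ≤ M)
    (z y : ℝ) :
    BddAbove {d : ℝ | ∃ u ∈ Icc (z - y) (z + y) ∩ Icc (0:ℝ) 1,
      ∃ v ∈ Icc (z - y) (z + y) ∩ Icc (0:ℝ) 1, d = |ρ u - ρ v|} := by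
  refine ⟨M + M, ?_⟩
  rintro d ⟨u, ⟨-, hu⟩, v, ⟨-, hv⟩, rfl⟩
  calc |ρ u - ρ v| ≤ |ρ u| + |ρ v| := abs_sub _ _
    _ ≤ M + M := add_le_add (hM u hu) (hM v hv)

/-- lower bound on the local modulus -/
private lemma omega_ge {ρ : ℝ → ℝ} {M : ℝ} (hM : ∀ u ∈ Icc (0:ℝ) 1, |ρ u| ≤ M)
    {y s x : ℝ} (hs : s ∈ Icc (0:ℝ) 1) (hx : x ∈ Icc (0:ℝ) 1) (hsx : |s - x| ≤ y) :
    |ρ s - ρ x| ≤ omegaMod ρ s y := by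
  have hy : 0 ≤ y := le_trans (abs_nonneg _) hsx
  have h := abs_le.1 hsx
  refine le_csSup (omega_bddAbove hM s y) ?_
  exact ⟨s, ⟨⟨by linarith, by linarith⟩, hs⟩, x, ⟨⟨by linarith, by linarith⟩, hx⟩, rfl⟩

private lemma omega_cont {ρ : ℝ → ℝ} (hρ : ContinuousOn ρ (Icc (0:ℝ) 1))
    {y : ℝ} (hy0 : 0 < y) :
    ∀ x ∈ Icc (0:ℝ) 1, ContinuousAt (fun z => omegaMod ρ z y) x := by
  obtain ⟨M, hM⟩ := isCompact_Icc.exists_bound_of_continuousOn hρ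
  simp only [Real.norm_eq_abs] at hM
  set S : ℝ → Set ℝ := fun z => {d : ℝ | ∃ u ∈ Icc (z - y) (z + y) ∩ Icc (0:ℝ) 1,
    ∃ v ∈ Icc (z - y) (z + y) ∩ Icc (0:ℝ) 1, d = |ρ u - ρ v|} with hS
  have hSdef : ∀ z, omegaMod ρ z y = sSup (S z) := fun z => rfl
  have hbdd : ∀ z, BddAbove (S z) := fun z => omega_bddAbove hM z y
  have hne : ∀ z : ℝ, max (z - y) 0 ≤ min (z + y) 1 → (S z).Nonempty := by
    intro z hz
    exact ⟨|ρ (max (z - y) 0) - ρ (max (z - y) 0)|, max (z - y) 0,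
      ⟨⟨le_max_left _ _, hz.trans (min_le_left _ _)⟩, le_max_right _ _,
        hz.trans (min_le_right _ _)⟩, max (z - y) 0,
      ⟨⟨le_max_left _ _, hz.trans (min_le_left _ _)⟩, le_max_right _ _,
        hz.trans (min_le_right _ _)⟩, rfl⟩
  have osb : ∀ ε δ : ℝ,
      (∀ u ∈ Icc (0:ℝ) 1, ∀ v ∈ Icc (0:ℝ) 1, |u - v| ≤ δ → |ρ u - ρ v| ≤ ε) →
      ∀ a b : ℝ, max (a - y) 0 ≤ min (a + y) 1 → max (b - y) 0 ≤ min (b + y) 1 →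
      |b - a| ≤ δ → sSup (S b) ≤ sSup (S a) + (ε + ε) := by
    intro ε δ hmod a b hwa hwb hab
    refine csSup_le (hne b hwb) ?_
    rintro d ⟨u, ⟨⟨huw1, huw2⟩, hu0, hu1⟩, v, ⟨⟨hvw1, hvw2⟩, hv0, hv1⟩, rfl⟩
    set L := max (a - y) 0 with hL
    set U := min (a + y) 1 with hU
    have hcab : (0:ℝ) ≤ |b - a| := abs_nonneg _
    have hba1 : -(|b - a|) ≤ b - a := neg_abs_le _
    have hba2 : b - a ≤ |b - a| := le_abs_self _
    have h1 : L - |b - a| ≤ max (b - y) 0 := by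
      rw [sub_le_iff_le_add, hL]
      refine max_le ?_ ?_
      · exact le_trans (by linarith [le_max_left (b - y) (0:ℝ)]) le_rfl
      · linarith [le_max_right (b - y) (0:ℝ)]
    have h2 : min (b + y) 1 ≤ U + |b - a| := by
      rw [hU]
      refine le_trans (min_le_min (by linarith : b + y ≤ a + y + |b - a|)
        (by linarith : (1:ℝ) ≤ 1 + |b - a|)) ?_
      rw [← min_add_add_right]
    have hcu := clamp_aux hwa hcab h1 h2 (max_le huw1 hu0) (le_min huw2 hu1)
    have hcv := clamp_aux hwa hcab h1 h2 (max_le hvw1 hv0) (le_min hvw2 hv1)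
    set u' := max L (min u U)
    set v' := max L (min v U)
    obtain ⟨hu'1, hu'2, hu'd⟩ := hcu
    obtain ⟨hv'1, hv'2, hv'd⟩ := hcv
    have hu'mem : u' ∈ Icc (0:ℝ) 1 :=
      ⟨le_trans (le_max_right _ _) hu'1, hu'2.trans (min_le_right _ _)⟩
    have hv'mem : v' ∈ Icc (0:ℝ) 1 :=
      ⟨le_trans (le_max_right _ _) hv'1, hv'2.trans (min_le_right _ _)⟩
    have hmid : |ρ u' - ρ v'| ≤ sSup (S a) := by
      refine le_csSup (hbdd a) ?_
      exact ⟨u', ⟨⟨le_trans (le_max_left _ _) hu'1, hu'2.trans (min_le_left _ _)⟩, hu'mem⟩,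
        v', ⟨⟨le_trans (le_max_left _ _) hv'1, hv'2.trans (min_le_left _ _)⟩, hv'mem⟩, rfl⟩
    have e1 : |ρ u - ρ u'| ≤ ε := hmod u ⟨hu0, hu1⟩ u' hu'mem (hu'd.trans hab)
    have e2 : |ρ v' - ρ v| ≤ ε := by
      rw [abs_sub_comm]; exact hmod v ⟨hv0, hv1⟩ v' hv'mem (hv'd.trans hab)
    calc |ρ u - ρ v| ≤ |ρ u - ρ u'| + |ρ u' - ρ v| := abs_sub_le _ _ _
      _ ≤ |ρ u - ρ u'| + (|ρ u' - ρ v'| + |ρ v' - ρ v|) :=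
          add_le_add le_rfl (abs_sub_le _ _ _)
      _ ≤ ε + (sSup (S a) + ε) := add_le_add e1 (add_le_add hmid e2)
      _ = sSup (S a) + (ε + ε) := by ring
  intro x hx
  rw [Metric.continuousAt_iff]
  intro ε hε
  have hucont := isCompact_Icc.uniformContinuousOn_of_continuous hρ
  rw [Metric.uniformContinuousOn_iff] at hucont
  obtain ⟨δ, hδ0, hδ⟩ := hucont (ε/4) (by linarith)
  refine ⟨min (δ/2) y, by positivity, ?_⟩
  intro x' hx'
  rw [Real.dist_eq] at hx' ⊢
  have hx'y : |x' - x| ≤ y := le_of_lt (lt_of_lt_of_le hx' (min_le_right _ _))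
  have hx'δ : |x' - x| ≤ δ/2 := le_of_lt (lt_of_lt_of_le hx' (min_le_left _ _))
  have hmod : ∀ u ∈ Icc (0:ℝ) 1, ∀ v ∈ Icc (0:ℝ) 1, |u - v| ≤ δ/2 → |ρ u - ρ v| ≤ ε/4 := by
    intro u hu v hv huv
    have := hδ u hu v hv (by rw [Real.dist_eq]; linarith)
    rw [Real.dist_eq] at this; linarith
  obtain ⟨h0, h1⟩ := hx
  have habs := abs_le.1 hx'y
  have hwx : max (x - y) 0 ≤ min (x + y) 1 := by
    refine max_le (le_min ?_ ?_) (le_min ?_ ?_) <;> linarith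
  have hwx' : max (x' - y) 0 ≤ min (x' + y) 1 := by
    refine max_le (le_min ?_ ?_) (le_min ?_ ?_) <;> linarith
  have b1 := osb (ε/4) (δ/2) hmod x x' hwx hwx' hx'δ
  have b2 := osb (ε/4) (δ/2) hmod x' x hwx' hwx (by rw [abs_sub_comm]; exact hx'δ)
  show |omegaMod ρ x' y - omegaMod ρ x y| < ε
  rw [hSdef x', hSdef x, abs_lt]
  constructor <;> linarith

private lemma key_eq {φ ψ : ℝ → ℝ} {b : ℝ} (hb0 : 0 ≤ b) (hb1 : b ≤ 1)
    (hψ : IntervalIntegrable ψ volume 0 b)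
    (heq : ∀ t ∈ Ioo (0:ℝ) 1, φ t = ψ t) :
    IntervalIntegrable φ volume 0 b ∧ (∫ t in (0:ℝ)..b, φ t) = ∫ t in (0:ℝ)..b, ψ t := by
  have hae : φ =ᵐ[volume.restrict (Ioc (0:ℝ) b)] ψ := by
    rw [Filter.EventuallyEq, ae_restrict_iff' measurableSet_Ioc]
    refine (MeasureTheory.ae_iff).2 (measure_mono_null ?_ (measure_singleton (1:ℝ)))
    intro t ht
    simp only [mem_setOf_eq, Classical.not_imp] at ht
    obtain ⟨⟨ht0, htb⟩, hne⟩ := ht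
    have h1 : ¬ t < 1 := fun h => hne (heq t ⟨ht0, h⟩)
    have : t = 1 := le_antisymm (htb.trans hb1) (not_lt.1 h1)
    simp [this]
  have hψ' : IntegrableOn ψ (Ioc 0 b) volume :=
    (intervalIntegrable_iff_integrableOn_Ioc_of_le hb0).1 hψ
  have hφ' : IntegrableOn φ (Ioc 0 b) volume := hψ'.congr hae.symm
  refine ⟨(intervalIntegrable_iff_integrableOn_Ioc_of_le hb0).2 hφ', ?_⟩
  rw [intervalIntegral.integral_of_le hb0, intervalIntegral.integral_of_le hb0]
  exact integral_congr_ae hae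

private lemma poly_integral (k : ℕ) (R : Polynomial ℝ) (hR : R.natDegree ≤ k) (h : ℝ → ℝ)
    (hh : ∀ m : ℕ, IntervalIntegrable (fun t => (-t) ^ m * h t) volume 0 1) :
    ∃ Spoly : Polynomial ℝ, Spoly.natDegree ≤ k ∧
      ∀ x : ℝ, (∫ t in (0:ℝ)..1, R.eval (x - t) * h t) = Spoly.eval x := by
  classical
  refine ⟨∑ i ∈ Finset.range (k+1), ∑ j ∈ Finset.range (i+1),
    Polynomial.C (R.coeff i * (i.choose j : ℝ) * ∫ t in (0:ℝ)..1, (-t) ^ (i - j) * h t) *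
      Polynomial.X ^ j, ?_, ?_⟩
  · refine Polynomial.natDegree_sum_le_of_forall_le _ _ fun i hi => ?_
    refine Polynomial.natDegree_sum_le_of_forall_le _ _ fun j hj => ?_
    refine (Polynomial.natDegree_mul_le).trans ?_
    rw [Polynomial.natDegree_C, Polynomial.natDegree_X_pow]
    simp only [zero_add]
    have := Finset.mem_range.1 hi
    have := Finset.mem_range.1 hj
    omega
  · intro x
    have hexp : ∀ t : ℝ, R.eval (x - t) * h t =
        ∑ i ∈ Finset.range (k+1), ∑ j ∈ Finset.range (i+1),
          (R.coeff i * (i.choose j : ℝ) * x ^ j) * ((-t) ^ (i - j) * h t) := by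
      intro t
      rw [Polynomial.eval_eq_sum_range' (lt_of_le_of_lt hR (Nat.lt_succ_self k)),
        Finset.sum_mul]
      refine Finset.sum_congr rfl fun i _ => ?_
      rw [show x - t = x + (-t) by ring, add_pow, Finset.mul_sum, Finset.sum_mul]
      refine Finset.sum_congr rfl fun j _ => ?_
      ring
    have hint2 : ∀ i ∈ Finset.range (k+1), ∀ j ∈ Finset.range (i+1),
        IntervalIntegrable
          (fun t => (R.coeff i * (i.choose j : ℝ) * x ^ j) * ((-t) ^ (i - j) * h t))
          volume 0 1 := fun i _ j _ => (hh (i - j)).const_mul _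
    have hint1 : ∀ i ∈ Finset.range (k+1),
        IntervalIntegrable (fun t => ∑ j ∈ Finset.range (i+1),
          (R.coeff i * (i.choose j : ℝ) * x ^ j) * ((-t) ^ (i - j) * h t)) volume 0 1 := by
      intro i hi
      have := IntervalIntegrable.sum (μ := volume) (a := 0) (b := 1) (Finset.range (i+1))
        (f := fun j => fun t => (R.coeff i * (i.choose j : ℝ) * x ^ j) * ((-t) ^ (i - j) * h t))
        (fun j hj => hint2 i hi j hj)
      rw [Finset.sum_fn] at this
      exact this
    simp_rw [hexp]
    rw [intervalIntegral.integral_finset_sum hint1, Polynomial.eval_finset_sum]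
    refine Finset.sum_congr rfl fun i hi => ?_
    rw [intervalIntegral.integral_finset_sum (hint2 i hi), Polynomial.eval_finset_sum]
    refine Finset.sum_congr rfl fun j hj => ?_
    rw [intervalIntegral.integral_const_mul]
    simp only [Polynomial.eval_mul, Polynomial.eval_C, Polynomial.eval_pow, Polynomial.eval_X]
    ring

private lemma master (k : ℕ) (y : ℝ) (hy0 : 0 < y) (hy1 : y < 1)
    (P Q : Polynomial ℝ) (hPdeg : P.natDegree ≤ k) (hQdeg : Q.natDegree ≤ k)
    (hPQ : ∀ u ∈ Icc (-1:ℝ) 1, P.eval u ≤ stepPhi u ∧ stepPhi u ≤ Q.eval u)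
    (ρ : ℝ → ℝ) (hρ : ContinuousOn ρ (Icc (0:ℝ) 1)) :
    (∃ A' : Polynomial ℝ, A'.natDegree ≤ k ∧ ∀ x ∈ Icc (0:ℝ) 1,
      Mop P Q (Gop y ρ 0) (deriv (Gop y ρ)) x = A'.eval x) ∧
    (∀ x ∈ Icc (0:ℝ) 1, Mop P Q (Gop y ρ 0) (deriv (Gop y ρ)) x ≤ ρ x) := by
  obtain ⟨M, hM⟩ := isCompact_Icc.exists_bound_of_continuousOn hρ
  simp only [Real.norm_eq_abs] at hM
  have hy1' : y ≤ 1 := le_of_lt hy1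
  set w : ℝ → ℝ := fun z => omegaMod ρ z y with hw
  set F : ℝ → ℝ := fun s => ρ s - w s with hF
  have hwAt : ∀ x ∈ Icc (0:ℝ) 1, ContinuousAt w x := omega_cont hρ hy0
  have hρAt : ∀ s ∈ Ioo (0:ℝ) 1, ContinuousAt ρ s := fun s hs =>
    hρ.continuousAt (Icc_mem_nhds hs.1 hs.2)
  have hFon : ContinuousOn F (Icc 0 1) :=
    hρ.sub (fun z hz => (hwAt z hz).continuousWithinAt)
  have hFat : ∀ s ∈ Ioo (0:ℝ) 1, ContinuousAt F s := fun s hs =>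
    (hρAt s hs).sub (hwAt s (Ioo_subset_Icc_self hs))
  have hFii : ∀ z ∈ Icc (0:ℝ) 1, ∀ z' ∈ Icc (0:ℝ) 1, IntervalIntegrable F volume z z' := by
    intro z hz z' hz'
    exact (hFon.mono (uIcc_subset_Icc hz hz')).intervalIntegrable
  have h01 : (0:ℝ) ∈ Icc (0:ℝ) 1 := left_mem_Icc.2 zero_le_one
  have h11 : (1:ℝ) ∈ Icc (0:ℝ) 1 := right_mem_Icc.2 zero_le_one
  set I : ℝ → ℝ := fun z => ∫ s in (0:ℝ)..z, F s with hI
  have hu01 : ∀ x ∈ Icc (0:ℝ) 1,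
      (1 - y) * x ∈ Icc (0:ℝ) 1 ∧ (1 - y) * x + y ∈ Icc (0:ℝ) 1 := by
    intro x hx; obtain ⟨hx0, hx1⟩ := hx
    refine ⟨⟨by nlinarith, by nlinarith⟩, ⟨by nlinarith, by nlinarith⟩⟩
  -- representation of Gop via the primitive I
  have hGrep : ∀ x ∈ Icc (0:ℝ) 1,
      Gop y ρ x = y⁻¹ * (I ((1 - y) * x + y) - I ((1 - y) * x)) := by
    intro x hx
    have step1 : Gop y ρ x = ∫ t in (0:ℝ)..1, F (y * t + (1 - y) * x) := by
      rw [Gop]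
      refine intervalIntegral.integral_congr fun t _ => ?_
      rw [hF]
      have : (1 - y) * x + y * t = y * t + (1 - y) * x := by ring
      rw [this]
    rw [step1, intervalIntegral.integral_comp_mul_add F (ne_of_gt hy0) ((1 - y) * x)]
    have e0 : y * 0 + (1 - y) * x = (1 - y) * x := by ring
    have e1 : y * 1 + (1 - y) * x = (1 - y) * x + y := by ring
    rw [e0, e1, smul_eq_mul]
    congr 1
    rw [hI]
    rw [← intervalIntegral.integral_interval_sub_left
      (hFii 0 h01 ((1 - y) * x + y) (hu01 x hx).2) (hFii 0 h01 ((1 - y) * x) (hu01 x hx).1)]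
  have hmeasF : ∀ z ∈ Ioo (0:ℝ) 1, StronglyMeasurableAtFilter F (nhds z) volume :=
    ContinuousOn.stronglyMeasurableAtFilter isOpen_Ioo
      (fun s hs => (hFat s hs).continuousWithinAt)
  have hIder : ∀ z ∈ Ioo (0:ℝ) 1, HasDerivAt I (F z) z := fun z hz =>
    intervalIntegral.integral_hasDerivAt_right
      (hFii 0 h01 z (Ioo_subset_Icc_self hz)) (hmeasF z hz) (hFat z hz)
  set D : ℝ → ℝ := fun x =>
    y⁻¹ * (F ((1 - y) * x + y) * (1 - y) - F ((1 - y) * x) * (1 - y)) with hD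
  have hGder : ∀ x ∈ Ioo (0:ℝ) 1, HasDerivAt (Gop y ρ) (D x) x := by
    intro x hx
    obtain ⟨hx0, hx1⟩ := hx
    have hax : (1 - y) * x ∈ Ioo (0:ℝ) 1 := ⟨by nlinarith, by nlinarith⟩
    have haxy : (1 - y) * x + y ∈ Ioo (0:ℝ) 1 := ⟨by nlinarith, by nlinarith⟩
    have hin1 : HasDerivAt (fun x' : ℝ => (1 - y) * x' + y) (1 - y) x := by
      simpa using ((hasDerivAt_id x).const_mul (1 - y)).add_const y
    have hin2 : HasDerivAt (fun x' : ℝ => (1 - y) * x') (1 - y) x := by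
      simpa using (hasDerivAt_id x).const_mul (1 - y)
    have h1 : HasDerivAt (fun x' => I ((1 - y) * x' + y)) (F ((1 - y) * x + y) * (1 - y)) x :=
      by have := (hIder _ haxy).comp x hin1; exact this
    have h2 : HasDerivAt (fun x' => I ((1 - y) * x')) (F ((1 - y) * x) * (1 - y)) x :=
      (hIder _ hax).comp x hin2
    have h3 : HasDerivAt (fun x' => y⁻¹ * (I ((1 - y) * x' + y) - I ((1 - y) * x'))) (D x) x :=
      (h1.sub h2).const_mul y⁻¹
    refine h3.congr_of_eventuallyEq ?_
    filter_upwards [Ioo_mem_nhds hx0 hx1] with x' hx'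
    exact hGrep x' (Ioo_subset_Icc_self hx')
  have hgD : ∀ t ∈ Ioo (0:ℝ) 1, deriv (Gop y ρ) t = D t := fun t ht => (hGder t ht).deriv
  have hDon : ContinuousOn D (Icc 0 1) := by
    have c1 : ContinuousOn (fun x : ℝ => F ((1 - y) * x + y)) (Icc 0 1) := by
      refine hFon.comp ((continuous_const.mul continuous_id).add continuous_const).continuousOn
        fun x hx => (hu01 x hx).2
    have c2 : ContinuousOn (fun x : ℝ => F ((1 - y) * x)) (Icc 0 1) := by
      refine hFon.comp (continuous_const.mul continuous_id).continuousOn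
        fun x hx => (hu01 x hx).1
    exact continuousOn_const.mul ((c1.mul continuousOn_const).sub (c2.mul continuousOn_const))
  have hGon : ContinuousOn (Gop y ρ) (Icc 0 1) := by
    have hIon : ContinuousOn I (Icc 0 1) := by
      have hint : IntegrableOn F (uIcc (0:ℝ) 1) volume := by
        rw [uIcc_of_le zero_le_one]; exact hFon.integrableOn_Icc
      have := intervalIntegral.continuousOn_primitive_interval (a := (0:ℝ)) (b := 1) hint
      rwa [uIcc_of_le zero_le_one] at this
    refine ContinuousOn.congr ?_ hGrep
    refine continuousOn_const.mul (ContinuousOn.sub ?_ ?_)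
    · exact hIon.comp ((continuous_const.mul continuous_id).add continuous_const).continuousOn
        fun x hx => (hu01 x hx).2
    · exact hIon.comp (continuous_const.mul continuous_id).continuousOn
        fun x hx => (hu01 x hx).1
  set g : ℝ → ℝ := deriv (Gop y ρ) with hg
  -- continuity of truncations of D
  have hmaxD : ContinuousOn (fun t => max (D t) 0) (Icc (0:ℝ) 1) := hDon.sup continuousOn_const
  have hmaxD' : ContinuousOn (fun t => max (-D t) 0) (Icc (0:ℝ) 1) :=
    hDon.neg.sup continuousOn_const
  -- pointwise agreement on (0,1)
  have heq1 : ∀ c : ℝ → ℝ, ∀ t ∈ Ioo (0:ℝ) 1, c t * max (g t) 0 = c t * max (D t) 0 := by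
    intro c t ht; rw [hgD t ht]
  have heq2 : ∀ c : ℝ → ℝ, ∀ t ∈ Ioo (0:ℝ) 1, c t * max (-g t) 0 = c t * max (-D t) 0 := by
    intro c t ht; rw [hgD t ht]
  -- integrability of deriv G on [0,x]
  have hgint : ∀ x ∈ Icc (0:ℝ) 1, IntervalIntegrable g volume 0 x := by
    intro x hx
    exact (key_eq hx.1 hx.2
      ((hDon.mono (uIcc_subset_Icc h01 hx)).intervalIntegrable)
      (fun t ht => hgD t ht)).1
  -- FTC
  have hFTC : ∀ x ∈ Icc (0:ℝ) 1, (∫ t in (0:ℝ)..x, g t) = Gop y ρ x - Gop y ρ 0 := by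
    intro x hx
    refine intervalIntegral.integral_eq_sub_of_hasDeriv_right_of_le hx.1
      (hGon.mono (Icc_subset_Icc le_rfl hx.2)) (fun t ht => ?_) (hgint x hx)
    have ht' : t ∈ Ioo (0:ℝ) 1 := ⟨ht.1, lt_of_lt_of_le ht.2 hx.2⟩
    rw [hgD t ht']
    exact (hGder t ht').hasDerivWithinAt
  -- G below ρ
  have hGle : ∀ x ∈ Icc (0:ℝ) 1, Gop y ρ x ≤ ρ x := by
    intro x hx
    have hrep : Gop y ρ x = ∫ t in (0:ℝ)..1, F ((1 - y) * x + y * t) := by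
      rw [Gop]
    rw [hrep]
    have haff : ∀ t ∈ Icc (0:ℝ) 1, (1 - y) * x + y * t ∈ Icc (0:ℝ) 1 := by
      intro t ht
      obtain ⟨hx0, hx1⟩ := hx; obtain ⟨ht0, ht1⟩ := ht
      exact ⟨by nlinarith, by nlinarith⟩
    have hii : IntervalIntegrable (fun t => F ((1 - y) * x + y * t)) volume 0 1 := by
      refine (hFon.comp ((continuous_const.add (continuous_const.mul continuous_id))).continuousOn
        ?_).intervalIntegrable
      rw [uIcc_of_le zero_le_one]; exact haff
    have hmono : ∀ t ∈ Icc (0:ℝ) 1, F ((1 - y) * x + y * t) ≤ ρ x := by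
      intro t ht
      set s := (1 - y) * x + y * t with hs
      have hsx : |s - x| ≤ y := by
        have : s - x = y * (t - x) := by rw [hs]; ring
        rw [this, abs_mul, abs_of_pos hy0]
        have : |t - x| ≤ 1 := by
          rw [abs_le]; constructor
          · nlinarith [ht.1, ht.2, hx.1, hx.2]
          · nlinarith [ht.1, ht.2, hx.1, hx.2]
        nlinarith
      have := omega_ge hM (haff t ht) hx hsx
      have h2 : ρ s - ρ x ≤ |ρ s - ρ x| := le_abs_self _
      rw [hF]
      simp only [hw]
      linarith
    calc (∫ t in (0:ℝ)..1, F ((1 - y) * x + y * t))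
        ≤ ∫ t in (0:ℝ)..1, ρ x := by
          refine intervalIntegral.integral_mono_on zero_le_one hii
            intervalIntegrable_const hmono
      _ = ρ x := by simp
  constructor
  · -- polynomial representation
    have hh1 : ∀ m : ℕ, IntervalIntegrable (fun t => (-t) ^ m * max (g t) 0) volume 0 1 := by
      intro m
      refine (key_eq zero_le_one le_rfl ?_ (heq1 (fun t => (-t) ^ m))).1
      refine (((continuous_neg.pow m).continuousOn.mul hmaxD).mono ?_).intervalIntegrable
      rw [uIcc_of_le zero_le_one]
    have hh2 : ∀ m : ℕ, IntervalIntegrable (fun t => (-t) ^ m * max (-g t) 0) volume 0 1 := by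
      intro m
      refine (key_eq zero_le_one le_rfl ?_ (heq2 (fun t => (-t) ^ m))).1
      refine (((continuous_neg.pow m).continuousOn.mul hmaxD').mono ?_).intervalIntegrable
      rw [uIcc_of_le zero_le_one]
    obtain ⟨SP, hSPdeg, hSP⟩ := poly_integral k P hPdeg (fun t => max (g t) 0) hh1
    obtain ⟨SQ, hSQdeg, hSQ⟩ := poly_integral k Q hQdeg (fun t => max (-g t) 0) hh2
    refine ⟨Polynomial.C (Gop y ρ 0) + SP - SQ, ?_, ?_⟩
    · refine (Polynomial.natDegree_sub_le _ _).trans (max_le ?_ hSQdeg)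
      refine (Polynomial.natDegree_add_le _ _).trans (max_le ?_ hSPdeg)
      simp
    · intro x _
      rw [Mop]
      simp only [Polynomial.eval_sub, Polynomial.eval_add, Polynomial.eval_C]
      rw [hSP x, hSQ x]
  · -- the sandwich bound
    intro x hx
    have hxm1 : ∀ t ∈ Icc (0:ℝ) 1, x - t ∈ Icc (-1:ℝ) 1 := by
      intro t ht
      exact ⟨by linarith [ht.2, hx.1], by linarith [ht.1, hx.2]⟩
    have hPc : Continuous fun t : ℝ => P.eval (x - t) :=
      P.continuous.comp (continuous_const.sub continuous_id)
    have hQc : Continuous fun t : ℝ => Q.eval (x - t) :=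
      Q.continuous.comp (continuous_const.sub continuous_id)
    have hPii : IntervalIntegrable (fun t => P.eval (x - t) * max (g t) 0) volume 0 1 := by
      refine (key_eq zero_le_one le_rfl ?_ (heq1 (fun t => P.eval (x - t)))).1
      refine ((hPc.continuousOn.mul hmaxD).mono ?_).intervalIntegrable
      rw [uIcc_of_le zero_le_one]
    have hQii : IntervalIntegrable (fun t => Q.eval (x - t) * max (-g t) 0) volume 0 1 := by
      refine (key_eq zero_le_one le_rfl ?_ (heq2 (fun t => Q.eval (x - t)))).1
      refine ((hQc.continuousOn.mul hmaxD').mono ?_).intervalIntegrable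
      rw [uIcc_of_le zero_le_one]
    have hindfun : ∀ (h : ℝ → ℝ),
        (fun t => stepPhi (x - t) * h t) = (Iio x).indicator h := by
      intro h
      funext t
      by_cases hlt : t < x
      · rw [indicator_of_mem (mem_Iio.2 hlt), stepPhi, if_pos (by linarith), one_mul]
      · rw [indicator_of_notMem (by simpa using hlt), stepPhi,
          if_neg (by push_neg at hlt ⊢; linarith), zero_mul]
    have hstepD : IntervalIntegrable (fun t => stepPhi (x - t) * max (D t) 0) volume 0 1 := by
      rw [hindfun, intervalIntegrable_iff_integrableOn_Ioc_of_le zero_le_one]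
      exact (hmaxD.integrableOn_Icc.mono_set Ioc_subset_Icc_self).indicator measurableSet_Iio
    have hstepD' : IntervalIntegrable (fun t => stepPhi (x - t) * max (-D t) 0) volume 0 1 := by
      rw [hindfun, intervalIntegrable_iff_integrableOn_Ioc_of_le zero_le_one]
      exact (hmaxD'.integrableOn_Icc.mono_set Ioc_subset_Icc_self).indicator measurableSet_Iio
    have hPhii : IntervalIntegrable (fun t => stepPhi (x - t) * max (g t) 0) volume 0 1 :=
      (key_eq zero_le_one le_rfl hstepD (heq1 (fun t => stepPhi (x - t)))).1
    have hPhii' : IntervalIntegrable (fun t => stepPhi (x - t) * max (-g t) 0) volume 0 1 :=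
      (key_eq zero_le_one le_rfl hstepD' (heq2 (fun t => stepPhi (x - t)))).1
    have cmp1 : (∫ t in (0:ℝ)..1, P.eval (x - t) * max (g t) 0)
        ≤ ∫ t in (0:ℝ)..1, stepPhi (x - t) * max (g t) 0 := by
      refine intervalIntegral.integral_mono_on zero_le_one hPii hPhii fun t ht => ?_
      exact mul_le_mul_of_nonneg_right ((hPQ (x - t) (hxm1 t ht)).1) (le_max_right _ _)
    have cmp2 : (∫ t in (0:ℝ)..1, stepPhi (x - t) * max (-g t) 0)
        ≤ ∫ t in (0:ℝ)..1, Q.eval (x - t) * max (-g t) 0 := by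
      refine intervalIntegral.integral_mono_on zero_le_one hPhii' hQii fun t ht => ?_
      exact mul_le_mul_of_nonneg_right ((hPQ (x - t) (hxm1 t ht)).2) (le_max_right _ _)
    have hsub : (∫ t in (0:ℝ)..1, stepPhi (x - t) * max (g t) 0)
        - (∫ t in (0:ℝ)..1, stepPhi (x - t) * max (-g t) 0)
        = ∫ t in (0:ℝ)..1, stepPhi (x - t) * g t := by
      rw [← intervalIntegral.integral_sub hPhii hPhii']
      refine intervalIntegral.integral_congr fun t _ => ?_
      rw [← mul_sub]
      have : max (g t) 0 - max (-g t) 0 = g t := max_zero_sub_max_neg_zero_eq_self (g t)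
      rw [this]
    have hindic : (∫ t in (0:ℝ)..1, stepPhi (x - t) * g t) = ∫ t in (0:ℝ)..x, g t := by
      rw [← intervalIntegral.integral_indicator (f := g) (μ := volume) hx]
      refine intervalIntegral.integral_congr_ae ?_
      refine (MeasureTheory.ae_iff).2 (measure_mono_null ?_ (measure_singleton x))
      intro t ht
      simp only [mem_setOf_eq, Classical.not_imp] at ht
      obtain ⟨-, hne⟩ := ht
      show t ∈ ({x} : Set ℝ)
      rw [mem_singleton_iff]
      by_contra htx
      apply hne
      rcases lt_or_gt_of_ne htx with h | h
      · rw [indicator_of_mem (by exact le_of_lt h : t ∈ {t : ℝ | t ≤ x}), stepPhi,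
          if_pos (by linarith), one_mul]
      · rw [indicator_of_notMem (by simp only [mem_setOf_eq]; linarith), stepPhi,
          if_neg (by linarith), zero_mul]
    have hFTCx := hFTC x hx
    have hfinal : Mop P Q (Gop y ρ 0) g x ≤ Gop y ρ x := by
      rw [Mop]
      have c3 : (∫ t in (0:ℝ)..1, P.eval (x - t) * max (g t) 0)
          - (∫ t in (0:ℝ)..1, Q.eval (x - t) * max (-g t) 0)
          ≤ ∫ t in (0:ℝ)..x, g t := by
        rw [← hindic, ← hsub]
        linarith
      linarith
    exact hfinal.trans (hGle x hx)

/-- Theorem 4.3, sandwich part: `A_k(ρ) = M_k(G_{1/k}(ρ))` and `B_k(ρ) = N_k(H_{1/k}(ρ))`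
are polynomials of degree at most `k` sandwiching `ρ`. -/
theorem stmt13 (k : ℕ) (hk : 2 ≤ k) (P Q : Polynomial ℝ)
    (hPdeg : P.natDegree ≤ k) (hQdeg : Q.natDegree ≤ k)
    (hPQ : ∀ u ∈ Icc (-1:ℝ) 1, P.eval u ≤ stepPhi u ∧ stepPhi u ≤ Q.eval u)
    (ρ : ℝ → ℝ) (hρ : ContinuousOn ρ (Icc (0:ℝ) 1)) :
    (∃ A' : Polynomial ℝ, A'.natDegree ≤ k ∧ ∀ x ∈ Icc (0:ℝ) 1,
      Mop P Q (Gop (1 / k) ρ 0) (deriv (Gop (1 / k) ρ)) x = A'.eval x) ∧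
    (∃ B' : Polynomial ℝ, B'.natDegree ≤ k ∧ ∀ x ∈ Icc (0:ℝ) 1,
      Nop P Q (Hop (1 / k) ρ 0) (deriv (Hop (1 / k) ρ)) x = B'.eval x) ∧
    (∀ x ∈ Icc (0:ℝ) 1,
      Mop P Q (Gop (1 / k) ρ 0) (deriv (Gop (1 / k) ρ)) x ≤ ρ x ∧
      ρ x ≤ Nop P Q (Hop (1 / k) ρ 0) (deriv (Hop (1 / k) ρ)) x) := by

  have hk1 : (1:ℝ) < (k:ℝ) := by exact_mod_cast lt_of_lt_of_le one_lt_two (by exact_mod_cast hk)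
  have hy0 : (0:ℝ) < 1 / k := by positivity
  have hy1 : (1:ℝ) / k < 1 := by rw [div_lt_one (by linarith)]; exact hk1
  set y : ℝ := 1 / k with hy
  obtain ⟨⟨A', hAdeg, hAe⟩, hAle⟩ := master k y hy0 hy1 P Q hPdeg hQdeg hPQ ρ hρ
  obtain ⟨⟨A2, hA2deg, hA2e⟩, hA2le⟩ :=
    master k y hy0 hy1 P Q hPdeg hQdeg hPQ (fun s => -ρ s) hρ.neg
  have hωneg : ∀ x δ : ℝ, omegaMod (fun s => -ρ s) x δ = omegaMod ρ x δ := by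
    intro x δ
    rw [omegaMod, omegaMod]
    congr 1
    ext d
    constructor <;> rintro ⟨u, hu, v, hv, rfl⟩ <;>
      exact ⟨u, hu, v, hv, by rw [show -ρ u - -ρ v = -(ρ u - ρ v) by ring, abs_neg]⟩
  have hHG : ∀ x : ℝ, Hop y ρ x = -(Gop y (fun s => -ρ s) x) := by
    intro x
    rw [Hop, Gop, ← intervalIntegral.integral_neg]
    refine intervalIntegral.integral_congr fun t _ => ?_
    rw [hωneg]
    ring
  have hHGf : Hop y ρ = fun x => -(Gop y (fun s => -ρ s) x) := funext hHG
  have hder : ∀ t : ℝ, deriv (Hop y ρ) t = -(deriv (Gop y (fun s => -ρ s)) t) := by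
    intro t
    rw [hHGf]
    exact deriv.neg
  have hNop : ∀ x : ℝ, Nop P Q (Hop y ρ 0) (deriv (Hop y ρ)) x =
      -(Mop P Q (Gop y (fun s => -ρ s) 0) (deriv (Gop y (fun s => -ρ s))) x) := by
    intro x
    rw [Nop, Mop, hHG 0]
    have e1 : (fun t => Q.eval (x - t) * max (deriv (Hop y ρ) t) 0)
        = fun t => Q.eval (x - t) * max (-(deriv (Gop y (fun s => -ρ s)) t)) 0 := by
      funext t; rw [hder t]
    have e2 : (fun t => P.eval (x - t) * max (-(deriv (Hop y ρ) t)) 0)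
        = fun t => P.eval (x - t) * max (deriv (Gop y (fun s => -ρ s)) t) 0 := by
      funext t; rw [hder t, neg_neg]
    rw [e1, e2]
    ring
  refine ⟨⟨A', hAdeg, hAe⟩, ⟨-A2, ?_, ?_⟩, fun x hx => ⟨hAle x hx, ?_⟩⟩
  · simpa using hA2deg
  · intro x hx
    rw [hNop x, hA2e x hx]
    simp
  · have := hA2le x hx
    rw [hNop x]
    linarith
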